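/- There exists N such that for all n ≥ N, with d = 2^{n+1} − 3, the 2-density of the set D := {i : 1 ≤ i ≤ d, i odd} \ {2^n − 1, 3·2^{n−1} − 1} equals 2/(2n−1); that is, every solution U of any length ℓ for D satisfies (2n−1)·s(U) ≥ 2ℓ, and some solution attains (2n−1)·s(U) = 2ℓ. -/

import Mathlib

/-- The binary weight `s₂(m)`: the sum of the base-2 digits of `m`. -/
def s2 (m : ℕ) : ℕ := (Nat.digits 2 m).sum

/-- The shift map on `{0, …, 2^ℓ - 1}`: it fixes `2^ℓ - 1` and sends any other `i`
to the remainder of `2·i` modulo `2^ℓ - 1`. -/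
def shift2 (ℓ i : ℕ) : ℕ := if i = 2 ^ ℓ - 1 then i else (2 * i) % (2 ^ ℓ - 1)

/-- `U : ℕ → ℕ` (supported on `D`) is a solution of length `ℓ` for `D`:
`0 ≤ u_d ≤ 2^ℓ - 1` and `∑ d·u_d` is a positive multiple of `2^ℓ - 1`. -/
structure IsSolution (D : Finset ℕ) (ℓ : ℕ) (U : ℕ → ℕ) : Prop where
  len_pos : 1 ≤ ℓ
  bounded : ∀ d, U d ≤ 2 ^ ℓ - 1
  supp_sub : ∀ d, d ∉ D → U d = 0
  dvd : (2 ^ ℓ - 1) ∣ ∑ d ∈ D, d * U d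
  pos : 0 < ∑ d ∈ D, d * U d

/-- The weight `s(U) = ∑_{d ∈ D} s₂(u_d)` of a solution. -/
def weight (D : Finset ℕ) (U : ℕ → ℕ) : ℕ := ∑ d ∈ D, s2 (U d)

/-- The support map `φ_U(k) = (∑_{d ∈ D} d·δ^k(u_d)) / (2^ℓ - 1)` of a solution,
viewed as an `ℓ`-periodic function on `ℕ`. -/
def supportMap (D : Finset ℕ) (ℓ : ℕ) (U : ℕ → ℕ) (k : ℕ) : ℕ :=
  (∑ d ∈ D, d * (shift2 ℓ)^[k] (U d)) / (2 ^ ℓ - 1)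

/-- A solution is irreducible when its support map is injective on `ℤ/ℓℤ`,
i.e. injective on `{0, …, ℓ-1}`. -/
def IrreducibleSol (D : Finset ℕ) (ℓ : ℕ) (U : ℕ → ℕ) : Prop :=
  Set.InjOn (supportMap D ℓ U) ↑(Finset.range ℓ)

/-- `U` is a shift of `V` (coordinatewise iterate of the shift map). -/
def IsShiftOf (ℓ : ℕ) (U V : ℕ → ℕ) : Prop :=
  ∃ k, ∀ d, U d = (shift2 ℓ)^[k] (V d)

/-- The set of odd integers `1 ≤ i ≤ d`. -/
def oddUpTo (d : ℕ) : Finset ℕ := (Finset.range (d + 1)).filter (fun i => i % 2 = 1)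

/-- `D = {i : 1 ≤ i ≤ 2^{n+1} - 3, i odd}`. -/
def oddD (n : ℕ) : Finset ℕ := oddUpTo (2 ^ (n + 1) - 3)

/-- The solution with `u_a = 1` and all other coordinates `0`. -/
def sol1 (a : ℕ) : ℕ → ℕ := fun d => if d = a then 1 else 0

/-- The solution with `u_a = x`, `u_b = y` and all other coordinates `0`. -/
def sol2 (a x b y : ℕ) : ℕ → ℕ := fun d => if d = a then x else if d = b then y else 0

/-- The solution with `u_a = x`, `u_b = y`, `u_c = z` and all other coordinates `0`. -/
def sol3 (a x b y c z : ℕ) : ℕ → ℕ :=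
  fun d => if d = a then x else if d = b then y else if d = c then z else 0

/-! ### Auxiliary definitions for the proof -/

/-- The set `D` in question. -/
def Dset (n : ℕ) : Finset ℕ :=
  ((oddUpTo (2 ^ (n + 1) - 3)).erase (2 ^ n - 1)).erase (3 * 2 ^ (n - 1) - 1)

/-- The odd part of a natural number. -/
def oddPart (x : ℕ) : ℕ := x / 2 ^ (x.factorization 2)

/-- The largest "dangerous doubling target" of the odd number `ω`. -/
def Wf (n ω : ℕ) : ℕ :=
  if ω = 3 then 3 * 2 ^ (n - 2) else ω * 2 ^ (Nat.log 2 ((2 ^ (n + 1) - 2) / ω))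

/-- Odd parts that can reach a "bad" cut. -/
def badcap (n ω : ℕ) : Prop := ω = 3 ∨ (5 ≤ ω ∧ ω ≤ 2 ^ n - 1)

instance (n ω : ℕ) : Decidable (badcap n ω) := by unfold badcap; infer_instance

/-- Numerator of the potential. -/
def thNum (n x : ℕ) : ℕ :=
  if x = 2 ^ n + 1 ∨ x = 2 ^ n + 2 then 1
  else if badcap n (oddPart x) ∧ 2 * x ≤ Wf n (oddPart x) then 2 ^ (2 * n - 1)
  else 1

/-- Denominator of the potential. -/
def thDen (n x : ℕ) : ℕ :=
  if x = 2 ^ n + 1 ∨ x = 2 ^ n + 2 then 2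
  else if badcap n (oddPart x) ∧ 2 * x ≤ Wf n (oddPart x) then (Wf n (oddPart x)) ^ 2
  else 1

/-- The "top bit" of `u` in the length-`ℓ` cyclic model. -/
def eps (ℓ u : ℕ) : ℕ := if u = 2 ^ ℓ - 1 then 1 else 2 * u / (2 ^ ℓ - 1)

/-- Accumulated value of the top bits. -/
def Efun (ℓ u : ℕ) : ℕ → ℕ
  | 0 => 0
  | (j+1) => 2 * Efun ℓ u j + eps ℓ ((shift2 ℓ)^[j] u)

/-! ### Basic lemmas on s2 -/

lemma s2_two_mul_add (a e : ℕ) (he : e ≤ 1) : s2 (2 * a + e) = s2 a + e := by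
  rcases Nat.eq_zero_or_pos (2 * a + e) with h | h
  · have ha : a = 0 ∧ e = 0 := by omega
    simp [ha.1, ha.2, s2]
  · unfold s2
    rw [Nat.digits_def' (by norm_num : 1 < 2) h]
    simp only [List.sum_cons]
    have h1 : (2 * a + e) % 2 = e := by omega
    have h2 : (2 * a + e) / 2 = a := by omega
    rw [h1, h2]
    omega

lemma s2_pow_two (k : ℕ) : s2 (2 ^ k) = 1 := by
  induction k with
  | zero => simp [s2]
  | succ k ih =>
    have : 2 ^ (k + 1) = 2 * 2 ^ k + 0 := by ring
    rw [this, s2_two_mul_add _ _ (by norm_num), ih]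

lemma s2_one : s2 1 = 1 := by simp [s2]

/-! ### Membership in D -/

lemma mem_Dset (n d : ℕ) :
    d ∈ Dset n ↔ d % 2 = 1 ∧ d ≤ 2 ^ (n + 1) - 3 ∧ d ≠ 2 ^ n - 1 ∧ d ≠ 3 * 2 ^ (n - 1) - 1 := by
  simp only [Dset, oddUpTo, Finset.mem_erase, Finset.mem_filter, Finset.mem_range,
    Nat.lt_succ_iff]
  tauto

/-! ### oddPart lemmas -/

lemma oddPart_decomp (x : ℕ) : x = 2 ^ (x.factorization 2) * oddPart x := by
  rcases Nat.eq_zero_or_pos x with h | h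
  · simp [h, oddPart]
  · exact (Nat.ordProj_mul_ordCompl_eq_self x 2).symm

lemma oddPart_odd (x : ℕ) (hx : x ≠ 0) : oddPart x % 2 = 1 := by
  have h2 : ¬ 2 ∣ oddPart x := Nat.not_dvd_ordCompl Nat.prime_two hx
  omega

lemma oddPart_two_mul (x : ℕ) (hx : x ≠ 0) : oddPart (2 * x) = oddPart x := by
  have hf : ((2 * x).factorization) 2 = x.factorization 2 + 1 := by
    rw [Nat.factorization_mul (by norm_num) hx]
    simp [Nat.Prime.factorization_self Nat.prime_two]
    ring
  unfold oddPart
  rw [hf, pow_succ, mul_comm (2 ^ (x.factorization 2)) 2, ← Nat.div_div_eq_div_mul,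
    Nat.mul_div_cancel_left x (by norm_num : 0 < 2)]

lemma oddPart_of_odd (x : ℕ) (h : x % 2 = 1) : oddPart x = x := by
  unfold oddPart
  rw [Nat.factorization_eq_zero_of_not_dvd (by omega)]
  simp

lemma oddPart_pos (x : ℕ) (hx : x ≠ 0) : 0 < oddPart x := by
  rcases Nat.eq_zero_or_pos (oddPart x) with h | h
  · exfalso; apply hx
    have := oddPart_decomp x
    rw [h] at this; simpa using this
  · exact h

/-! ### Wf lemmas. Throughout `P` denotes `2^(n-2)`, with `n = m+2`. -/

section core
variable (m : ℕ)

local notation "P" => 2 ^ m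

lemma Ppos : 0 < (P : ℕ) := Nat.pow_pos (by norm_num)

lemma cap_eq : 2 ^ (m + 2 + 1) - 2 = 8 * P - 2 := by
  have : (2:ℕ) ^ (m + 3) = 8 * P := by rw [pow_add]; ring
  rw [show m + 2 + 1 = m + 3 from rfl, this]

lemma Wf_le_cap (ω : ℕ) (hω0 : 0 < ω) (hle : ω ≤ 4 * P - 1) :
    Wf (m + 2) ω ≤ 8 * P - 2 := by
  have hP := Ppos m
  unfold Wf
  rw [cap_eq]
  split_ifs with h3
  · have h : (2:ℕ) ^ (m + 2 - 2) = P := rfl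
    rw [h]; omega
  · have hcap : ω ≤ 8 * P - 2 := by omega
    have hd : 2 ^ Nat.log 2 ((8 * P - 2) / ω) ≤ (8 * P - 2) / ω := by
      apply Nat.pow_log_le_self
      have : 1 ≤ (8 * P - 2) / ω := (Nat.one_le_div_iff hω0).mpr hcap
      omega
    calc ω * 2 ^ Nat.log 2 ((8 * P - 2) / ω) ≤ ω * ((8 * P - 2) / ω) :=
      Nat.mul_le_mul_left ω hd
    _ ≤ 8 * P - 2 := by rw [mul_comm]; exact Nat.div_mul_le_self _ _

lemma Wf_lb (ω : ℕ) (hω : 5 ≤ ω) (hω3 : ω ≠ 3) (hle : ω ≤ 4 * P - 1) :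
    4 * P ≤ Wf (m + 2) ω := by
  have hP := Ppos m
  unfold Wf
  rw [cap_eq, if_neg hω3]
  have hlt : (8 * P - 2) / ω < 2 ^ (Nat.log 2 ((8 * P - 2) / ω) + 1) :=
    Nat.lt_pow_succ_log_self (by norm_num) _
  have h2 : 8 * P - 2 < 2 ^ (Nat.log 2 ((8 * P - 2) / ω) + 1) * ω := by
    rw [← Nat.div_lt_iff_lt_mul (by omega : 0 < ω)]
    exact hlt
  rw [pow_succ] at h2
  rw [show 2 ^ Nat.log 2 ((8 * P - 2) / ω) * 2 * ω
      = 2 * (ω * 2 ^ Nat.log 2 ((8 * P - 2) / ω)) from by ring] at h2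
  omega

lemma Wf_max (ω k : ℕ) (hω : 0 < ω) (hω3 : ω ≠ 3) (h : ω * 2 ^ k ≤ 8 * P - 2) :
    ω * 2 ^ k ≤ Wf (m + 2) ω := by
  have hP := Ppos m
  unfold Wf
  rw [cap_eq, if_neg hω3]
  have h1 : 2 ^ k ≤ (8 * P - 2) / ω := by
    rw [Nat.le_div_iff_mul_le hω]
    rw [mul_comm] at h
    exact h
  have h2 : k ≤ Nat.log 2 ((8 * P - 2) / ω) := by
    rw [Nat.le_log_iff_pow_le (by norm_num)]
    · exact h1
    · have : 1 ≤ 2 ^ k := Nat.one_le_two_pow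
      omega
  exact Nat.mul_le_mul_left ω (Nat.pow_le_pow_right (by norm_num) h2)

lemma Wf_three : Wf (m + 2) 3 = 3 * P := by
  unfold Wf
  rw [if_pos rfl]
  rfl

lemma log_helper (ω : ℕ) (hω0 : 0 < ω) (h1 : ω * P ≤ 8 * P - 2) (h2 : 8 * P - 2 < 2 * (ω * P)) :
    Nat.log 2 ((8 * P - 2) / ω) = m := by
  apply Nat.log_eq_of_pow_le_of_lt_pow
  · rw [Nat.le_div_iff_mul_le hω0, mul_comm]; exact h1
  · rw [Nat.div_lt_iff_lt_mul hω0, pow_succ]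
    calc 8 * P - 2 < 2 * (ω * P) := h2
    _ = P * 2 * ω := by ring

lemma Wf_five (hm : 2 ≤ m) : Wf (m + 2) 5 = 5 * P := by
  have hP : 4 ≤ (P:ℕ) := by
    calc 4 = 2 ^ 2 := by norm_num
    _ ≤ P := Nat.pow_le_pow_right (by norm_num) hm
  unfold Wf
  rw [cap_eq, if_neg (by norm_num)]
  rw [log_helper m 5 (by norm_num) (by omega) (by omega)]

lemma Wf_seven (hm : 2 ≤ m) : Wf (m + 2) 7 = 7 * P := by
  have hP : 4 ≤ (P:ℕ) := by
    calc 4 = 2 ^ 2 := by norm_num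
    _ ≤ P := Nat.pow_le_pow_right (by norm_num) hm
  unfold Wf
  rw [cap_eq, if_neg (by norm_num)]
  rw [log_helper m 7 (by norm_num) (by omega) (by omega)]

/-! ### Unfolding helpers for the potential -/

lemma th_of_special (x : ℕ) (h : x = 2 ^ (m + 2) + 1 ∨ x = 2 ^ (m + 2) + 2) :
    thNum (m + 2) x = 1 ∧ thDen (m + 2) x = 2 := by
  unfold thNum thDen
  rw [if_pos h, if_pos h]
  exact ⟨rfl, rfl⟩

lemma th_of_danger (x : ℕ) (hns : ¬(x = 2 ^ (m + 2) + 1 ∨ x = 2 ^ (m + 2) + 2))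
    (hb : badcap (m + 2) (oddPart x)) (hdz : 2 * x ≤ Wf (m + 2) (oddPart x)) :
    thNum (m + 2) x = 2 ^ (2 * (m + 2) - 1) ∧ thDen (m + 2) x = (Wf (m + 2) (oddPart x)) ^ 2 := by
  unfold thNum thDen
  rw [if_neg hns, if_neg hns, if_pos ⟨hb, hdz⟩, if_pos ⟨hb, hdz⟩]
  exact ⟨rfl, rfl⟩

lemma th_of_other (x : ℕ) (hns : ¬(x = 2 ^ (m + 2) + 1 ∨ x = 2 ^ (m + 2) + 2))
    (h : ¬(badcap (m + 2) (oddPart x) ∧ 2 * x ≤ Wf (m + 2) (oddPart x))) :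
    thNum (m + 2) x = 1 ∧ thDen (m + 2) x = 1 := by
  unfold thNum thDen
  rw [if_neg hns, if_neg hns, if_neg h, if_neg h]
  exact ⟨rfl, rfl⟩

lemma pow_n_eq : (2:ℕ) ^ (m + 2) = 4 * P := by rw [pow_add]; ring

lemma pow_2m3 : (2:ℕ) ^ (2 * (m + 2) - 1) = 8 * P * P := by
  have h1 : 2 * (m + 2) - 1 = m + m + 3 := by omega
  rw [h1, pow_add, pow_add]
  ring

lemma th_one (hm : 2 ≤ m) : thNum (m + 2) 1 = 1 ∧ thDen (m + 2) 1 = 1 := by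
  have hP : 4 ≤ (P:ℕ) := by
    calc 4 = 2 ^ 2 := by norm_num
    _ ≤ P := Nat.pow_le_pow_right (by norm_num) hm
  apply th_of_other
  · rw [pow_n_eq]; omega
  · rintro ⟨hb, -⟩
    rw [oddPart_of_odd 1 rfl] at hb
    rcases hb with h | h <;> omega

lemma th_three (hm : 2 ≤ m) :
    thNum (m + 2) 3 = 8 * P * P ∧ thDen (m + 2) 3 = (3 * P) ^ 2 := by
  have hP : 4 ≤ (P:ℕ) := by
    calc 4 = 2 ^ 2 := by norm_num
    _ ≤ P := Nat.pow_le_pow_right (by norm_num) hm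
  have h := th_of_danger m 3 (by rw [pow_n_eq]; omega)
    (by rw [oddPart_of_odd 3 rfl]; exact Or.inl rfl)
    (by rw [oddPart_of_odd 3 rfl, Wf_three]; omega)
  rw [oddPart_of_odd 3 rfl, Wf_three, pow_2m3] at h
  exact h

lemma th_five (hm : 2 ≤ m) :
    thNum (m + 2) 5 = 8 * P * P ∧ thDen (m + 2) 5 = (5 * P) ^ 2 := by
  have hP : 4 ≤ (P:ℕ) := by
    calc 4 = 2 ^ 2 := by norm_num
    _ ≤ P := Nat.pow_le_pow_right (by norm_num) hm
  have hb : badcap (m + 2) 5 := by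
    right
    refine ⟨by omega, ?_⟩
    rw [pow_n_eq]; omega
  have h := th_of_danger m 5 (by rw [pow_n_eq]; omega)
    (by rw [oddPart_of_odd 5 rfl]; exact hb)
    (by rw [oddPart_of_odd 5 rfl, Wf_five m hm]; omega)
  rw [oddPart_of_odd 5 rfl, Wf_five m hm, pow_2m3] at h
  exact h

lemma th_seven (hm : 2 ≤ m) :
    thNum (m + 2) 7 = 8 * P * P ∧ thDen (m + 2) 7 = (7 * P) ^ 2 := by
  have hP : 4 ≤ (P:ℕ) := by
    calc 4 = 2 ^ 2 := by norm_num
    _ ≤ P := Nat.pow_le_pow_right (by norm_num) hm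
  have hb : badcap (m + 2) 7 := by
    right
    refine ⟨by omega, ?_⟩
    rw [pow_n_eq]; omega
  have h := th_of_danger m 7 (by rw [pow_n_eq]; omega)
    (by rw [oddPart_of_odd 7 rfl]; exact hb)
    (by rw [oddPart_of_odd 7 rfl, Wf_seven m hm]; omega)
  rw [oddPart_of_odd 7 rfl, Wf_seven m hm, pow_2m3] at h
  exact h

/-! ### Potential lemmas -/

lemma badcap_bounds (ω : ℕ) (hb : badcap (m + 2) ω) : 0 < ω ∧ ω ≤ 4 * P - 1 := by
  have hP := Ppos m
  have hpn := pow_n_eq m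
  rcases hb with h | ⟨h5, hle⟩
  · subst h
    refine ⟨by norm_num, by omega⟩
  · rw [hpn] at hle
    exact ⟨by omega, by omega⟩

lemma Wf_pos (ω : ℕ) (hb : badcap (m + 2) ω) : 0 < Wf (m + 2) ω := by
  obtain ⟨h0, _⟩ := badcap_bounds m ω hb
  unfold Wf
  split_ifs with h
  · positivity
  · have h2 : 0 < 2 ^ Nat.log 2 ((2 ^ (m + 2 + 1) - 2) / ω) := Nat.pow_pos (by norm_num)
    exact Nat.mul_pos h0 h2

lemma Wsq_ge (ω : ℕ) (hb : badcap (m + 2) ω) : 8 * P * P ≤ (Wf (m + 2) ω) ^ 2 := by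
  have hP := Ppos m
  rcases hb with h | ⟨h5, hle⟩
  · subst h
    rw [Wf_three]
    nlinarith
  · have hle' : ω ≤ 4 * P - 1 := by rw [pow_n_eq] at hle; omega
    have := Wf_lb m ω h5 (by omega) hle'
    nlinarith

lemma Wsq_le (ω : ℕ) (hb : badcap (m + 2) ω) : (Wf (m + 2) ω) ^ 2 ≤ 64 * P * P := by
  have hP := Ppos m
  obtain ⟨h0, hle⟩ := badcap_bounds m ω hb
  have h1 := Wf_le_cap m ω h0 hle
  have h2 : Wf (m + 2) ω ≤ 8 * P := by omega
  calc (Wf (m + 2) ω) ^ 2 ≤ (8 * P) ^ 2 := Nat.pow_le_pow_left h2 2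
  _ = 64 * P * P := by ring

lemma thDen_pos (x : ℕ) : 0 < thDen (m + 2) x := by
  unfold thDen
  split_ifs with h1 h2
  · norm_num
  · have := Wf_pos m (oddPart x) h2.1
    positivity
  · norm_num

lemma thNum_pos (x : ℕ) : 0 < thNum (m + 2) x := by
  unfold thNum
  split_ifs <;> positivity

lemma thNum_le_thDen (x : ℕ) : thNum (m + 2) x ≤ thDen (m + 2) x := by
  unfold thNum thDen
  split_ifs with h1 h2
  · norm_num
  · rw [pow_2m3]
    exact Wsq_ge m (oddPart x) h2.1
  · exact le_rfl

lemma thDen_le_8_thNum (x : ℕ) : thDen (m + 2) x ≤ 8 * thNum (m + 2) x := by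
  unfold thNum thDen
  split_ifs with h1 h2
  · norm_num
  · rw [pow_2m3]
    calc (Wf (m + 2) (oddPart x)) ^ 2 ≤ 64 * P * P := Wsq_le m (oddPart x) h2.1
    _ = 8 * (8 * P * P) := by ring
  · norm_num

lemma step_of_den (K x x' : ℕ) (hND : thNum (m + 2) x ≤ thDen (m + 2) x)
    (h : (2 * x) ^ 2 * thDen (m + 2) x' ≤ K * x' ^ 2 * thNum (m + 2) x') :
    (2 * x) ^ 2 * thNum (m + 2) x * thDen (m + 2) x' ≤
      K * x' ^ 2 * thNum (m + 2) x' * thDen (m + 2) x := by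
  calc (2 * x) ^ 2 * thNum (m + 2) x * thDen (m + 2) x'
      = ((2 * x) ^ 2 * thDen (m + 2) x') * thNum (m + 2) x := by ring
  _ ≤ (K * x' ^ 2 * thNum (m + 2) x') * thDen (m + 2) x := Nat.mul_le_mul h hND
  _ = _ := by ring

lemma th_gen (x' : ℕ) (hm : 14 ≤ m) (hodd : x' % 2 = 1) (h9 : 9 ≤ x') (hle : x' ≤ 4 * P - 1) :
    ∃ Q, thNum (m + 2) x' = 8 * P * P ∧ thDen (m + 2) x' = (x' * Q) ^ 2 ∧
      x' * Q ≤ 8 * P - 2 ∧ 1 ≤ Q ∧ 2 * Q ≤ P := by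
  have hP : 2 ^ 14 ≤ (P:ℕ) := Nat.pow_le_pow_right (by norm_num) hm
  have hPpos := Ppos m
  have hpn := pow_n_eq m
  have hop : oddPart x' = x' := oddPart_of_odd x' hodd
  have hns : ¬(x' = 2 ^ (m + 2) + 1 ∨ x' = 2 ^ (m + 2) + 2) := by
    rintro (h | h) <;> omega
  have hx'3 : x' ≠ 3 := by omega
  have hb : badcap (m + 2) x' := by
    right
    exact ⟨by omega, by omega⟩
  have hdz : 2 * x' ≤ Wf (m + 2) x' := by
    have := Wf_max m x' 1 (by omega) hx'3 (by rw [pow_one]; omega)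
    rw [pow_one] at this
    omega
  have hth := th_of_danger m x' hns (by rw [hop]; exact hb) (by rw [hop]; exact hdz)
  rw [hop] at hth
  set Q := 2 ^ Nat.log 2 ((2 ^ (m + 2 + 1) - 2) / x') with hQ
  have hW : Wf (m + 2) x' = x' * Q := by
    unfold Wf
    rw [if_neg hx'3]
  have hcap : x' * Q ≤ 8 * P - 2 := by
    rw [← hW]
    exact Wf_le_cap m x' (by omega) hle
  have hQ1 : 1 ≤ Q := Nat.one_le_two_pow
  have hQP : 2 * Q ≤ P := by
    have h1 : 9 * Q ≤ x' * Q := Nat.mul_le_mul_right Q h9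
    have h2 : 9 * Q ≤ 8 * P := by omega
    have h3 : Q < P := by omega
    have h4 : Nat.log 2 ((2 ^ (m + 2 + 1) - 2) / x') < m :=
      (Nat.pow_lt_pow_iff_right (by norm_num : 1 < 2)).mp h3
    calc 2 * Q = 2 ^ (Nat.log 2 ((2 ^ (m + 2 + 1) - 2) / x') + 1) := by
          rw [hQ, pow_succ]; ring
    _ ≤ 2 ^ m := Nat.pow_le_pow_right (by norm_num) (by omega)
  refine ⟨Q, ?_, ?_, hcap, hQ1, hQP⟩
  · rw [hth.1, pow_2m3]
  · rw [hth.2, hW]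

lemma th_special_values (x : ℕ) (hm : 14 ≤ m) (h : x = 4 * P + 1 ∨ x = 4 * P + 2) :
    thNum (m + 2) x = 1 ∧ thDen (m + 2) x = 2 := by
  apply th_of_special
  rw [pow_n_eq]
  exact h

/-- Monotonicity of the potential under doubling. -/
lemma th_mono (x : ℕ) (hm : 14 ≤ m) (hx : 1 ≤ x) :
    thNum (m + 2) x * thDen (m + 2) (2 * x) ≤ thNum (m + 2) (2 * x) * thDen (m + 2) x := by
  have hP : 2 ^ 14 ≤ (P:ℕ) := Nat.pow_le_pow_right (by norm_num) hm
  have hPpos := Ppos m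
  have hpn := pow_n_eq m
  have hx0 : x ≠ 0 := by omega
  have hω2 : oddPart (2 * x) = oddPart x := oddPart_two_mul x hx0
  by_cases hxs : x = 2 ^ (m + 2) + 1 ∨ x = 2 ^ (m + 2) + 2
  · -- x is special
    obtain ⟨hN, hD⟩ := th_of_special m x hxs
    have h2ns : ¬(2 * x = 2 ^ (m + 2) + 1 ∨ 2 * x = 2 ^ (m + 2) + 2) := by
      rintro (h | h) <;> omega
    have h2no : ¬(badcap (m + 2) (oddPart (2 * x)) ∧
        2 * (2 * x) ≤ Wf (m + 2) (oddPart (2 * x))) := by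
      rintro ⟨hb, hd⟩
      obtain ⟨hb0, hble⟩ := badcap_bounds m _ hb
      have := Wf_le_cap m _ hb0 hble
      omega
    obtain ⟨hN2, hD2⟩ := th_of_other m (2 * x) h2ns h2no
    rw [hN, hD, hN2, hD2]
    omega
  · by_cases hdx : badcap (m + 2) (oddPart x) ∧ 2 * x ≤ Wf (m + 2) (oddPart x)
    · -- x is in the danger zone
      obtain ⟨hN, hD⟩ := th_of_danger m x hxs hdx.1 hdx.2
      by_cases h2s : 2 * x = 2 ^ (m + 2) + 1 ∨ 2 * x = 2 ^ (m + 2) + 2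
      · -- 2x is special
        obtain ⟨hN2, hD2⟩ := th_of_special m (2 * x) h2s
        rw [hN, hD, hN2, hD2, pow_2m3]
        have h2x : 2 * x = 4 * P + 2 := by omega
        have hW : 4 * P + 2 ≤ Wf (m + 2) (oddPart x) := by omega
        calc 8 * P * P * 2 ≤ (4 * P + 2) ^ 2 := by nlinarith
        _ ≤ (Wf (m + 2) (oddPart x)) ^ 2 := Nat.pow_le_pow_left hW 2
        _ = 1 * (Wf (m + 2) (oddPart x)) ^ 2 := by ring
      · by_cases hdz2 : 2 * (2 * x) ≤ Wf (m + 2) (oddPart (2 * x))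
        · obtain ⟨hN2, hD2⟩ := th_of_danger m (2 * x) h2s (by rw [hω2]; exact hdx.1) hdz2
          rw [hN, hD, hN2, hD2, hω2]
        · obtain ⟨hN2, hD2⟩ := th_of_other m (2 * x) h2s (by
            rintro ⟨hb, hd⟩
            exact hdz2 hd)
          rw [hN, hD, hN2, hD2, pow_2m3]
          have := Wsq_ge m (oddPart x) hdx.1
          omega
    · -- x is ordinary
      obtain ⟨hN, hD⟩ := th_of_other m x hxs hdx
      have h2ns : ¬(2 * x = 2 ^ (m + 2) + 1 ∨ 2 * x = 2 ^ (m + 2) + 2) := by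
        rintro (h | h)
        · omega
        · -- x = 2P+1 would be in the danger zone
          exfalso
          apply hdx
          have hxval : x = 2 * P + 1 := by omega
          have hopx : oddPart x = x := oddPart_of_odd x (by omega)
          rw [hopx, hxval]
          have hb : badcap (m + 2) (2 * P + 1) := by
            right
            exact ⟨by omega, by omega⟩
          refine ⟨hb, ?_⟩
          have := Wf_max m (2 * P + 1) 1 (by omega) (by omega)
            (by rw [pow_one]; omega)
          rw [pow_one] at this
          omega
      have h2no : ¬(badcap (m + 2) (oddPart (2 * x)) ∧
          2 * (2 * x) ≤ Wf (m + 2) (oddPart (2 * x))) := by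
        rintro ⟨hb, hd⟩
        apply hdx
        rw [hω2] at hb hd
        exact ⟨hb, by omega⟩
      obtain ⟨hN2, hD2⟩ := th_of_other m (2 * x) h2ns h2no
      rw [hN, hD, hN2, hD2]

/-- Key lemma: a cut all the way down to `1` is safe. -/
lemma key_K1 (x : ℕ) (hm : 14 ≤ m) (hx : 1 ≤ x) (hd : (2 * x - 1) ∈ Dset (m + 2)) :
    (2 * x) ^ 2 * thNum (m + 2) x ≤ 2 ^ (2 * (m + 2) - 1) * thDen (m + 2) x := by
  have hP : 2 ^ 14 ≤ (P:ℕ) := Nat.pow_le_pow_right (by norm_num) hm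
  have hPpos := Ppos m
  have hpn := pow_n_eq m
  have hx0 : x ≠ 0 := by omega
  rw [mem_Dset] at hd
  obtain ⟨hdo, hdle, hdn1, hdn2⟩ := hd
  have hd8 : (2:ℕ) ^ (m + 2 + 1) - 3 = 8 * P - 3 := by
    have : (2:ℕ) ^ (m + 3) = 8 * P := by rw [pow_add]; ring
    rw [show m + 2 + 1 = m + 3 from rfl, this]
  rw [hd8] at hdle
  have hdn1' : 2 * x ≠ 4 * P := by
    intro h
    apply hdn1
    rw [pow_n_eq]
    omega
  have hdn2' : 2 * x ≠ 6 * P := by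
    intro h
    apply hdn2
    have : (2:ℕ) ^ (m + 2 - 1) = 2 * P := by
      rw [show m + 2 - 1 = m + 1 from by omega, pow_add]
      ring
    rw [this]
    omega
  have hcap : 2 * x ≤ 8 * P - 2 := by omega
  have hns : ¬(x = 2 ^ (m + 2) + 1 ∨ x = 2 ^ (m + 2) + 2) := by
    rintro (h | h) <;> omega
  -- decompose x
  set f := x.factorization 2 with hf
  set ω := oddPart x with hω
  have hdecomp : x = 2 ^ f * ω := oddPart_decomp x
  have hωodd : ω % 2 = 1 := oddPart_odd x hx0
  have hωpos : 0 < ω := by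
    rcases Nat.eq_zero_or_pos ω with h | h
    · rw [h, mul_zero] at hdecomp; omega
    · exact h
  have h2x : 2 * x = ω * 2 ^ (f + 1) := by
    rw [hdecomp, pow_succ]; ring
  rcases (by omega : ω = 1 ∨ ω = 3 ∨ 5 ≤ ω) with h1 | h3 | h5
  · -- ω = 1 : x is a power of two, small
    rw [h1, one_mul] at h2x
    have hlt : 2 ^ (f + 1) < 2 ^ (m + 3) := by
      have : (2:ℕ) ^ (m + 3) = 8 * P := by rw [pow_add]; ring
      omega
    have hf1 : f + 1 < m + 3 := (Nat.pow_lt_pow_iff_right (by norm_num : 1 < 2)).mp hlt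
    have hfne : f + 1 ≠ m + 2 := by
      intro h
      apply hdn1'
      rw [h2x, h, pow_n_eq]
    have hf2 : f + 1 ≤ m + 1 := by omega
    have hsmall : 2 * x ≤ 2 * P := by
      calc 2 * x = 2 ^ (f + 1) := h2x
      _ ≤ 2 ^ (m + 1) := Nat.pow_le_pow_right (by norm_num) hf2
      _ = 2 * P := by rw [pow_add]; ring
    have hnb : ¬(badcap (m + 2) ω ∧ 2 * x ≤ Wf (m + 2) ω) := by
      rintro ⟨hb, -⟩
      rw [h1] at hb
      rcases hb with h | h <;> omega
    obtain ⟨hN, hD⟩ := th_of_other m x hns (by rw [← hω]; exact hnb)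
    rw [hN, hD, pow_2m3]
    calc (2 * x) ^ 2 * 1 = (2 * x) ^ 2 := by ring
    _ ≤ (2 * P) ^ 2 := Nat.pow_le_pow_left hsmall 2
    _ = 4 * (P * P) := by ring
    _ ≤ 8 * (P * P) := Nat.mul_le_mul_right (P * P) (by norm_num)
    _ = 8 * P * P * 1 := by ring
  · -- ω = 3
    rw [h3] at h2x
    have hlt : 2 ^ (f + 1) < 2 ^ (m + 2) := by
      have h4 : (3:ℕ) * 2 ^ (f + 1) ≤ 8 * P - 2 := by omega
      rw [pow_n_eq]
      omega
    have hf1 : f + 1 < m + 2 := (Nat.pow_lt_pow_iff_right (by norm_num : 1 < 2)).mp hlt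
    have hfne : f + 1 ≠ m + 1 := by
      intro h
      apply hdn2'
      rw [h2x, h]
      have : (2:ℕ) ^ (m + 1) = 2 * P := by rw [pow_add]; ring
      rw [this]; ring
    have hf2 : f + 1 ≤ m := by omega
    have hsmall : 2 * x ≤ 3 * P := by
      calc 2 * x = 3 * 2 ^ (f + 1) := h2x
      _ ≤ 3 * 2 ^ m := Nat.mul_le_mul_left 3 (Nat.pow_le_pow_right (by norm_num) hf2)
    have hb : badcap (m + 2) ω := Or.inl h3
    have hdz : 2 * x ≤ Wf (m + 2) ω := by
      rw [h3, Wf_three]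
      omega
    obtain ⟨hN, hD⟩ := th_of_danger m x hns (by rw [← hω]; exact hb) (by rw [← hω]; exact hdz)
    rw [hN, hD, ← hω, h3, Wf_three]
    calc (2 * x) ^ 2 * 2 ^ (2 * (m + 2) - 1) = 2 ^ (2 * (m + 2) - 1) * (2 * x) ^ 2 := by ring
    _ ≤ 2 ^ (2 * (m + 2) - 1) * (3 * P) ^ 2 :=
        Nat.mul_le_mul_left _ (Nat.pow_le_pow_left hsmall 2)
  · -- ω ≥ 5
    have hb : badcap (m + 2) ω := by
      right
      refine ⟨h5, ?_⟩
      rw [pow_n_eq]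
      have : ω * 2 ≤ ω * 2 ^ (f + 1) := by
        apply Nat.mul_le_mul_left
        calc (2:ℕ) = 2 ^ 1 := by norm_num
        _ ≤ 2 ^ (f + 1) := Nat.pow_le_pow_right (by norm_num) (by omega)
      omega
    have hdz : 2 * x ≤ Wf (m + 2) ω := by
      rw [h2x]
      exact Wf_max m ω (f + 1) hωpos (by omega) (by omega)
    obtain ⟨hN, hD⟩ := th_of_danger m x hns (by rw [← hω]; exact hb) (by rw [← hω]; exact hdz)
    rw [hN, hD, ← hω]
    calc (2 * x) ^ 2 * 2 ^ (2 * (m + 2) - 1) = 2 ^ (2 * (m + 2) - 1) * (2 * x) ^ 2 := by ring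
    _ ≤ 2 ^ (2 * (m + 2) - 1) * (Wf (m + 2) ω) ^ 2 :=
        Nat.mul_le_mul_left _ (Nat.pow_le_pow_left hdz 2)

lemma M_eq : (2:ℕ) ^ (m + 2 + 1) - 3 = 8 * P - 3 := by
  have : (2:ℕ) ^ (m + 3) = 8 * P := by rw [pow_add]; ring
  rw [show m + 2 + 1 = m + 3 from rfl, this]

lemma crude_pow (c : ℕ) (hc : 2 ≤ c) (hP : 2 ^ 14 ≤ (P:ℕ)) :
    512 * (P * P) * (c * c) ≤ (8 * (P * P)) ^ c := by
  induction c with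
  | zero => omega
  | succ c ih =>
    rcases (by omega : c ≤ 1 ∨ 2 ≤ c) with h1 | h2
    · have hc1 : c = 1 := by omega
      subst hc1
      have hPP : 2 ^ 14 * 2 ^ 14 ≤ P * P := Nat.mul_le_mul hP hP
      calc 512 * (P * P) * (2 * 2) = 2048 * (P * P) := by ring
      _ ≤ (P * P) * (P * P) := by nlinarith
      _ ≤ 64 * ((P * P) * (P * P)) := by omega
      _ = (8 * (P * P)) ^ 2 := by ring
    · have ihh := ih h2
      have hc2 : c + 1 ≤ 2 * c := by omega
      have hc4 : (c + 1) * (c + 1) ≤ (c * c) * 4 := by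
        calc (c + 1) * (c + 1) ≤ (2 * c) * (2 * c) := Nat.mul_le_mul hc2 hc2
        _ = (c * c) * 4 := by ring
      have hP4 : 4 ≤ (P:ℕ) := le_trans (by norm_num) hP
      have hPP : 16 ≤ (P:ℕ) * P := Nat.mul_le_mul hP4 hP4
      calc 512 * (P * P) * ((c + 1) * (c + 1))
          ≤ 512 * (P * P) * ((c * c) * 4) :=
            Nat.mul_le_mul_left _ hc4
      _ = 512 * (P * P) * (c * c) * 4 := by ring
      _ ≤ 512 * (P * P) * (c * c) * (8 * (P * P)) :=
            Nat.mul_le_mul_left _ (by omega)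
      _ ≤ (8 * (P * P)) ^ c * (8 * (P * P)) := Nat.mul_le_mul_right _ ihh
      _ = (8 * (P * P)) ^ (c + 1) := by rw [pow_succ]

/-- The main per-step inequality. -/
lemma main_step (S : Finset ℕ) (hm : 14 ≤ m) (hS : S ⊆ Dset (m + 2)) (x x' : ℕ)
    (hx : 1 ≤ x) (hx' : 1 ≤ x') (hrel : 2 * x = x' + ∑ d ∈ S, d) :
    (2 * x) ^ 2 * thNum (m + 2) x * thDen (m + 2) x' ≤
      2 ^ ((2 * (m + 2) - 1) * S.card) * x' ^ 2 * thNum (m + 2) x' * thDen (m + 2) x := by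
  have hP : 2 ^ 14 ≤ (P:ℕ) := Nat.pow_le_pow_right (by norm_num) hm
  have hPpos := Ppos m
  have hpn := pow_n_eq m
  have h2m3 := pow_2m3 m
  have hMeq := M_eq m
  have hND := thNum_le_thDen m x
  have hD8 := thDen_le_8_thNum m x'
  rcases (by omega : S.card = 0 ∨ S.card = 1 ∨ 2 ≤ S.card) with h0 | h1 | hc
  · -- no cut: pure doubling
    have hSempty : S = ∅ := Finset.card_eq_zero.mp h0
    have hsum : ∑ d ∈ S, d = 0 := by rw [hSempty]; simp
    have hx'eq : x' = 2 * x := by omega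
    subst hx'eq
    simp only [h0, Nat.mul_zero, pow_zero, one_mul]
    calc (2 * x) ^ 2 * thNum (m + 2) x * thDen (m + 2) (2 * x)
        = (2 * x) ^ 2 * (thNum (m + 2) x * thDen (m + 2) (2 * x)) := by ring
    _ ≤ (2 * x) ^ 2 * (thNum (m + 2) (2 * x) * thDen (m + 2) x) :=
        Nat.mul_le_mul_left _ (th_mono m x hm hx)
    _ = (2 * x) ^ 2 * thNum (m + 2) (2 * x) * thDen (m + 2) x := by ring
  · -- a single cut
    obtain ⟨d, hSd⟩ := Finset.card_eq_one.mp h1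
    have hdD : d ∈ Dset (m + 2) := hS (by rw [hSd]; exact Finset.mem_singleton_self d)
    have hsum : ∑ e ∈ S, e = d := by rw [hSd]; simp
    have hdD' := (mem_Dset (m + 2) d).mp hdD
    obtain ⟨hdo, hdle0, hdn1, hdn2⟩ := hdD'
    rw [hMeq] at hdle0
    have hw : 2 * x = x' + d := by omega
    have hx'odd : x' % 2 = 1 := by omega
    rw [h1, mul_one]
    rcases (by omega : x' = 1 ∨ x' = 3 ∨ x' = 5 ∨ x' = 7 ∨ (9 ≤ x' ∧ x' ≤ 4 * P - 1) ∨
      4 * P - 1 < x') with hv | hv | hv | hv | hv | hv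
    · -- x' = 1 : use the key lemma
      subst hv
      obtain ⟨hN1, hD1⟩ := th_one m (by omega)
      rw [hN1, hD1]
      have hK := key_K1 m x hm hx (by rw [show 2 * x - 1 = d from by omega]; exact hdD)
      calc (2 * x) ^ 2 * thNum (m + 2) x * 1 = (2 * x) ^ 2 * thNum (m + 2) x := by ring
      _ ≤ 2 ^ (2 * (m + 2) - 1) * thDen (m + 2) x := hK
      _ = 2 ^ (2 * (m + 2) - 1) * 1 ^ 2 * 1 * thDen (m + 2) x := by ring
    · -- x' = 3
      subst hv
      obtain ⟨hN3, hD3⟩ := th_three m (by omega)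
      apply step_of_den
      · exact hND
      · rw [hN3, hD3, h2m3]
        have h2x8 : 2 * x ≤ 8 * P := by omega
        have hsq : (2 * x) ^ 2 ≤ (8 * P) ^ 2 := Nat.pow_le_pow_left h2x8 2
        calc (2 * x) ^ 2 * (3 * P) ^ 2 = (3 * P) ^ 2 * (2 * x) ^ 2 := by ring
        _ ≤ (3 * P) ^ 2 * (8 * P) ^ 2 := Nat.mul_le_mul_left _ hsq
        _ = 8 * P * P * 3 ^ 2 * (8 * P * P) := by ring
    · -- x' = 5
      subst hv
      obtain ⟨hN5, hD5⟩ := th_five m (by omega)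
      by_cases hxs : x = 2 ^ (m + 2) + 1 ∨ x = 2 ^ (m + 2) + 2
      · obtain ⟨hNs, hDs⟩ := th_of_special m x hxs
        rw [hNs, hDs, hN5, hD5, h2m3]
        have h2x : 2 * x ≤ 8 * P + 4 := by
          rcases hxs with h | h <;> omega
        have hsq : (2 * x) ^ 2 ≤ (8 * P + 4) ^ 2 := Nat.pow_le_pow_left h2x 2
        have hkey : (8 * P + 4) ^ 2 ≤ 128 * (P * P) := by nlinarith
        calc (2 * x) ^ 2 * 1 * (5 * P) ^ 2 = (2 * x) ^ 2 * (25 * (P * P)) := by ring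
        _ ≤ 128 * (P * P) * (25 * (P * P)) := by
            apply Nat.mul_le_mul _ (le_refl _)
            omega
        _ = 8 * P * P * 5 ^ 2 * (8 * P * P) * 2 := by ring
      · apply step_of_den
        · exact hND
        · rw [hN5, hD5, h2m3]
          have hxs1 : x ≠ 4 * P + 1 := by intro h; exact hxs (Or.inl (by omega))
          have hxs2 : x ≠ 4 * P + 2 := by intro h; exact hxs (Or.inr (by omega))
          have h2x8 : 2 * x ≤ 8 * P := by omega
          have hsq : (2 * x) ^ 2 ≤ (8 * P) ^ 2 := Nat.pow_le_pow_left h2x8 2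
          calc (2 * x) ^ 2 * (5 * P) ^ 2 = (5 * P) ^ 2 * (2 * x) ^ 2 := by ring
          _ ≤ (5 * P) ^ 2 * (8 * P) ^ 2 := Nat.mul_le_mul_left _ hsq
          _ = 8 * P * P * 5 ^ 2 * (8 * P * P) := by ring
    · -- x' = 7
      subst hv
      obtain ⟨hN7, hD7⟩ := th_seven m (by omega)
      by_cases hxs : x = 2 ^ (m + 2) + 1 ∨ x = 2 ^ (m + 2) + 2
      · obtain ⟨hNs, hDs⟩ := th_of_special m x hxs
        rw [hNs, hDs, hN7, hD7, h2m3]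
        have h2x : 2 * x ≤ 8 * P + 4 := by
          rcases hxs with h | h <;> omega
        have hsq : (2 * x) ^ 2 ≤ (8 * P + 4) ^ 2 := Nat.pow_le_pow_left h2x 2
        have hkey : (8 * P + 4) ^ 2 ≤ 128 * (P * P) := by nlinarith
        calc (2 * x) ^ 2 * 1 * (7 * P) ^ 2 = (2 * x) ^ 2 * (49 * (P * P)) := by ring
        _ ≤ 128 * (P * P) * (49 * (P * P)) := by
            apply Nat.mul_le_mul _ (le_refl _)
            omega
        _ = 8 * P * P * 7 ^ 2 * (8 * P * P) * 2 := by ring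
      · apply step_of_den
        · exact hND
        · rw [hN7, hD7, h2m3]
          have hxs1 : x ≠ 4 * P + 1 := by intro h; exact hxs (Or.inl (by omega))
          have hxs2 : x ≠ 4 * P + 2 := by intro h; exact hxs (Or.inr (by omega))
          have h2x8 : 2 * x ≤ 8 * P := by omega
          have hsq : (2 * x) ^ 2 ≤ (8 * P) ^ 2 := Nat.pow_le_pow_left h2x8 2
          calc (2 * x) ^ 2 * (7 * P) ^ 2 = (7 * P) ^ 2 * (2 * x) ^ 2 := by ring
          _ ≤ (7 * P) ^ 2 * (8 * P) ^ 2 := Nat.mul_le_mul_left _ hsq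
          _ = 8 * P * P * 7 ^ 2 * (8 * P * P) := by ring
    · -- 9 ≤ x' ≤ 4P - 1 : the generic danger target
      obtain ⟨h9, hle4⟩ := hv
      obtain ⟨Q, hNg, hDg, hcapQ, hQ1, hQP⟩ := th_gen m x' hm hx'odd h9 hle4
      apply step_of_den
      · exact hND
      · rw [hNg, hDg, h2m3]
        have hdQ : d * Q ≤ (8 * P) * Q := Nat.mul_le_mul_right Q (by omega)
        have h8PQ : (8 * P) * Q = 4 * P * (2 * Q) := by ring
        have h4PP : 4 * P * (2 * Q) ≤ 4 * P * P := Nat.mul_le_mul_left _ hQP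
        have hdistr : (2 * x) * Q = x' * Q + d * Q := by rw [hw]; ring
        have hwq : (2 * x) * Q ≤ 8 * P - 2 + 4 * (P * P) := by
          rw [hdistr]
          have : d * Q ≤ 4 * (P * P) := by
            calc d * Q ≤ (8 * P) * Q := hdQ
            _ = 4 * P * (2 * Q) := h8PQ
            _ ≤ 4 * P * P := h4PP
            _ = 4 * (P * P) := by ring
          omega
        have hP2 : 2 * P ≤ P * P := Nat.mul_le_mul_right P (by omega)
        have hPP : 8 * P - 2 + 4 * (P * P) ≤ 8 * (P * P) := by omega
        have hfinal : (2 * x) * (x' * Q) ≤ x' * (8 * (P * P)) := by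
          calc (2 * x) * (x' * Q) = x' * ((2 * x) * Q) := by ring
          _ ≤ x' * (8 * (P * P)) := Nat.mul_le_mul_left _ (by omega)
        have hsq : ((2 * x) * (x' * Q)) ^ 2 ≤ (x' * (8 * (P * P))) ^ 2 :=
          Nat.pow_le_pow_left hfinal 2
        calc (2 * x) ^ 2 * (x' * Q) ^ 2 = ((2 * x) * (x' * Q)) ^ 2 := by ring
        _ ≤ (x' * (8 * (P * P))) ^ 2 := hsq
        _ = 8 * P * P * x' ^ 2 * (8 * P * P) := by ring
    · -- x' large
      have hx'big : 4 * P + 1 ≤ x' := by omega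
      have h3x : 2 * x ≤ 3 * x' := by omega
      calc (2 * x) ^ 2 * thNum (m + 2) x * thDen (m + 2) x'
          ≤ (2 * x) ^ 2 * thDen (m + 2) x * (8 * thNum (m + 2) x') :=
          Nat.mul_le_mul (Nat.mul_le_mul_left _ hND) hD8
      _ = (8 * (2 * x) ^ 2) * (thNum (m + 2) x' * thDen (m + 2) x) := by ring
      _ ≤ (8 * (3 * x') ^ 2) * (thNum (m + 2) x' * thDen (m + 2) x) :=
          Nat.mul_le_mul_right _ (Nat.mul_le_mul_left 8 (Nat.pow_le_pow_left h3x 2))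
      _ ≤ (2 ^ (2 * (m + 2) - 1) * x' ^ 2) * (thNum (m + 2) x' * thDen (m + 2) x) := by
          apply Nat.mul_le_mul_right
          rw [h2m3]
          have hP4 : 4 ≤ (P:ℕ) := le_trans (by norm_num) hP
          have hPP : 16 ≤ (P:ℕ) * P := Nat.mul_le_mul hP4 hP4
          calc 8 * (3 * x') ^ 2 = 72 * x' ^ 2 := by ring
          _ ≤ (8 * (P * P)) * x' ^ 2 := Nat.mul_le_mul_right _ (by omega)
          _ = 8 * P * P * x' ^ 2 := by ring
      _ = 2 ^ (2 * (m + 2) - 1) * x' ^ 2 * thNum (m + 2) x' * thDen (m + 2) x := by ring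
  · -- at least two cuts : crude bound
    have hdle : ∀ d ∈ S, d ≤ 8 * P - 3 := by
      intro d hd
      have := (mem_Dset (m + 2) d).mp (hS hd)
      rw [hMeq] at this
      exact this.2.1
    have hsum_le : ∑ d ∈ S, d ≤ S.card * (8 * P - 3) := by
      have := Finset.sum_le_card_nsmul S id (8 * P - 3) (by intro d hd; exact hdle d hd)
      simpa using this
    set c := S.card with hcdef
    have hBc : ∑ d ∈ S, d ≤ (8 * P - 3) * c := by rw [mul_comm]; exact hsum_le
    have h3c : 3 * c ≤ 8 * P * c := Nat.mul_le_mul_right c (by omega)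
    have hsub : (8 * P - 3) * c = 8 * P * c - 3 * c := Nat.sub_mul _ _ _
    have hx'K : x' + (8 * P - 3) * c ≤ x' * (1 + (8 * P - 3) * c) := by
      have h1 : (8 * P - 3) * c ≤ x' * ((8 * P - 3) * c) := Nat.le_mul_of_pos_left _ (by omega)
      calc x' + (8 * P - 3) * c ≤ x' + x' * ((8 * P - 3) * c) := by omega
      _ = x' * (1 + (8 * P - 3) * c) := by ring
    have h1K : 1 + (8 * P - 3) * c ≤ 8 * P * c := by omega
    have h2xb : 2 * x ≤ x' * (8 * P * c) := by
      calc 2 * x = x' + ∑ d ∈ S, d := hrel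
      _ ≤ x' + (8 * P - 3) * c := by omega
      _ ≤ x' * (1 + (8 * P - 3) * c) := hx'K
      _ ≤ x' * (8 * P * c) := Nat.mul_le_mul_left _ h1K
    have hsq : (2 * x) ^ 2 ≤ (x' * (8 * P * c)) ^ 2 := Nat.pow_le_pow_left h2xb 2
    have hcp := crude_pow m c hc hP
    have hexp : (2:ℕ) ^ ((2 * (m + 2) - 1) * c) = (8 * (P * P)) ^ c := by
      rw [pow_mul, h2m3]
      congr 1
      ring
    calc (2 * x) ^ 2 * thNum (m + 2) x * thDen (m + 2) x'
        ≤ (2 * x) ^ 2 * thDen (m + 2) x * (8 * thNum (m + 2) x') :=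
        Nat.mul_le_mul (Nat.mul_le_mul_left _ hND) hD8
    _ = (8 * (2 * x) ^ 2) * (thNum (m + 2) x' * thDen (m + 2) x) := by ring
    _ ≤ (8 * (x' * (8 * P * c)) ^ 2) * (thNum (m + 2) x' * thDen (m + 2) x) :=
        Nat.mul_le_mul_right _ (Nat.mul_le_mul_left 8 hsq)
    _ = (512 * (P * P) * (c * c)) * x' ^ 2 * (thNum (m + 2) x' * thDen (m + 2) x) := by ring
    _ ≤ ((8 * (P * P)) ^ c) * x' ^ 2 * (thNum (m + 2) x' * thDen (m + 2) x) :=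
        Nat.mul_le_mul_right _ (Nat.mul_le_mul_right _ hcp)
    _ = 2 ^ ((2 * (m + 2) - 1) * c) * x' ^ 2 * thNum (m + 2) x' * thDen (m + 2) x := by
        rw [hexp]; ring

/-! ### The cyclic telescoping argument -/

lemma core_cyclic (ℓ : ℕ) (hm : 14 ≤ m) (φ : ℕ → ℕ) (S : ℕ → Finset ℕ)
    (hφ : ∀ k, k ≤ ℓ → 1 ≤ φ k) (hS : ∀ k, k < ℓ → S k ⊆ Dset (m + 2))
    (hrel : ∀ k, k < ℓ → 2 * φ k = φ (k + 1) + ∑ d ∈ S k, d) (hper : φ ℓ = φ 0) :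
    2 * ℓ ≤ (2 * (m + 2) - 1) * ∑ k ∈ Finset.range ℓ, (S k).card := by
  set n := m + 2 with hn
  set F : ℕ → ℚ := fun k => ((φ k : ℚ)) ^ 2 * (thNum n (φ k) : ℚ) / (thDen n (φ k) : ℚ)
    with hF
  set w : ℕ → ℕ := fun k => (2 * n - 1) * (S k).card with hw
  have hFpos : ∀ k, k ≤ ℓ → 0 < F k := by
    intro k hk
    have h1 := hφ k hk
    have h2 := thNum_pos m (φ k)
    have h3 := thDen_pos m (φ k)
    rw [hF]
    have hφq : (0:ℚ) < (φ k : ℚ) := by exact_mod_cast h1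
    have hNq : (0:ℚ) < (thNum n (φ k) : ℚ) := by exact_mod_cast h2
    have hDq : (0:ℚ) < (thDen n (φ k) : ℚ) := by exact_mod_cast h3
    positivity
  have hstepq : ∀ k, k < ℓ → 4 * F k ≤ 2 ^ (w k) * F (k + 1) := by
    intro k hk
    have hx := hφ k (by omega)
    have hx' := hφ (k + 1) (by omega)
    have hnat := main_step m (S k) hm (hS k hk) (φ k) (φ (k + 1)) hx hx' (hrel k hk)
    have hDx : (0:ℚ) < (thDen n (φ k) : ℚ) := by exact_mod_cast thDen_pos m (φ k)
    have hDx' : (0:ℚ) < (thDen n (φ (k + 1)) : ℚ) := by exact_mod_cast thDen_pos m (φ (k + 1))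
    have h4 : 4 * F k = (4 * (φ k : ℚ) ^ 2 * (thNum n (φ k) : ℚ)) / (thDen n (φ k) : ℚ) := by
      rw [hF]; ring
    have h5 : 2 ^ (w k) * F (k + 1) =
        ((2:ℚ) ^ (w k) * (φ (k + 1) : ℚ) ^ 2 * (thNum n (φ (k + 1)) : ℚ)) /
          (thDen n (φ (k + 1)) : ℚ) := by
      rw [hF]; ring
    rw [h4, h5, div_le_div_iff₀ hDx hDx']
    have hq : ((2 * φ k : ℕ) : ℚ) ^ 2 * (thNum n (φ k) : ℚ) * (thDen n (φ (k + 1)) : ℚ) ≤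
        ((2:ℚ) ^ ((2 * n - 1) * (S k).card)) * ((φ (k + 1) : ℕ) : ℚ) ^ 2 *
          (thNum n (φ (k + 1)) : ℚ) * (thDen n (φ k) : ℚ) := by
      exact_mod_cast hnat
    push_cast at hq
    have hwk : w k = (2 * n - 1) * (S k).card := rfl
    rw [hwk]
    nlinarith [hq]
  have hind : ∀ j, j ≤ ℓ → 4 ^ j * F 0 ≤ 2 ^ (∑ k ∈ Finset.range j, w k) * F j := by
    intro j
    induction j with
    | zero => intro _; simp
    | succ j ih =>
      intro hj
      have hjl : j < ℓ := by omega
      have h1 := ih (by omega)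
      have h2 := hstepq j hjl
      have hF0 : 0 < F 0 := hFpos 0 (by omega)
      calc 4 ^ (j + 1) * F 0 = 4 * (4 ^ j * F 0) := by ring
      _ ≤ 4 * (2 ^ (∑ k ∈ Finset.range j, w k) * F j) := by
          have : (0:ℚ) ≤ 4 := by norm_num
          exact mul_le_mul_of_nonneg_left h1 this
      _ = 2 ^ (∑ k ∈ Finset.range j, w k) * (4 * F j) := by ring
      _ ≤ 2 ^ (∑ k ∈ Finset.range j, w k) * (2 ^ (w j) * F (j + 1)) := by
          apply mul_le_mul_of_nonneg_left h2
          positivity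
      _ = 2 ^ (∑ k ∈ Finset.range (j + 1), w k) * F (j + 1) := by
          rw [Finset.sum_range_succ, pow_add]; ring
  have hfin := hind ℓ (le_refl ℓ)
  have hFl : F ℓ = F 0 := by rw [hF]; simp only [hper]
  rw [hFl] at hfin
  have hF0 : 0 < F 0 := hFpos 0 (by omega)
  have h4 : (4:ℚ) ^ ℓ ≤ 2 ^ (∑ k ∈ Finset.range ℓ, w k) := by
    exact le_of_mul_le_mul_right (by linarith [hfin]) hF0
  have h2 : (2:ℚ) ^ (2 * ℓ) ≤ 2 ^ (∑ k ∈ Finset.range ℓ, w k) := by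
    calc (2:ℚ) ^ (2 * ℓ) = 4 ^ ℓ := by rw [pow_mul]; norm_num
    _ ≤ _ := h4
  have hle : 2 * ℓ ≤ ∑ k ∈ Finset.range ℓ, w k := by
    have := (pow_le_pow_iff_right₀ (by norm_num : (1:ℚ) < 2)).mp h2
    exact this
  calc 2 * ℓ ≤ ∑ k ∈ Finset.range ℓ, w k := hle
  _ = (2 * n - 1) * ∑ k ∈ Finset.range ℓ, (S k).card := by
      rw [Finset.mul_sum]

end core

/-! ### From solutions to cyclic data -/

lemma two_pow_ge (ℓ : ℕ) (hl : 1 ≤ ℓ) : 2 ≤ 2 ^ ℓ := by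
  calc 2 = 2 ^ 1 := by norm_num
  _ ≤ 2 ^ ℓ := Nat.pow_le_pow_right (by norm_num) hl

lemma shift2_le (ℓ : ℕ) (hl : 1 ≤ ℓ) (u : ℕ) (hu : u ≤ 2 ^ ℓ - 1) :
    shift2 ℓ u ≤ 2 ^ ℓ - 1 := by
  have h2 : 2 ≤ 2 ^ ℓ := two_pow_ge ℓ hl
  unfold shift2
  split
  · exact hu
  · have := Nat.mod_lt (2 * u) (show 0 < 2 ^ ℓ - 1 by omega)
    omega

lemma shift2_eps (ℓ : ℕ) (hl : 1 ≤ ℓ) (u : ℕ) (hu : u ≤ 2 ^ ℓ - 1) :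
    2 * u = shift2 ℓ u + eps ℓ u * (2 ^ ℓ - 1) ∧ eps ℓ u ≤ 1 := by
  have h2 : 2 ≤ 2 ^ ℓ := two_pow_ge ℓ hl
  have hT : 0 < 2 ^ ℓ - 1 := by omega
  unfold shift2 eps
  split_ifs with h
  · subst h
    exact ⟨by ring, le_refl 1⟩
  · constructor
    · exact (Nat.mod_add_div' (2 * u) (2 ^ ℓ - 1)).symm
    · have : 2 * u / (2 ^ ℓ - 1) < 2 := by
        rw [Nat.div_lt_iff_lt_mul hT]; omega
      omega

lemma shift2_iter_le (ℓ : ℕ) (hl : 1 ≤ ℓ) (u k : ℕ) (hu : u ≤ 2 ^ ℓ - 1) :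
    (shift2 ℓ)^[k] u ≤ 2 ^ ℓ - 1 := by
  induction k with
  | zero => simpa
  | succ k ih => rw [Function.iterate_succ_apply']; exact shift2_le ℓ hl _ ih

lemma odd_T (ℓ : ℕ) (hl : 1 ≤ ℓ) : (2 ^ ℓ - 1) % 2 = 1 := by
  obtain ⟨j, rfl⟩ : ∃ j, ℓ = j + 1 := ⟨ℓ - 1, by omega⟩
  have h1 : 1 ≤ 2 ^ j := Nat.one_le_two_pow
  have : 2 ^ (j + 1) = 2 * 2 ^ j := by ring
  omega

lemma shift2_pos (ℓ : ℕ) (hl : 1 ≤ ℓ) (u : ℕ) (hu : u ≤ 2 ^ ℓ - 1) (hpos : 0 < u) :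
    0 < shift2 ℓ u := by
  have h2 : 2 ≤ 2 ^ ℓ := two_pow_ge ℓ hl
  unfold shift2
  split
  · exact hpos
  · rename_i h
    rcases Nat.eq_zero_or_pos ((2 * u) % (2 ^ ℓ - 1)) with h0 | h0
    · exfalso
      have hdvd : (2 ^ ℓ - 1) ∣ 2 * u := Nat.dvd_of_mod_eq_zero h0
      have hcop : Nat.Coprime (2 ^ ℓ - 1) 2 := by
        have h1 := odd_T ℓ hl
        exact ((Nat.Prime.coprime_iff_not_dvd Nat.prime_two).mpr (by omega)).symm
      have : (2 ^ ℓ - 1) ∣ u := by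
        have := hcop.dvd_of_dvd_mul_left (by rwa [mul_comm] at hdvd)
        exact this
      have := Nat.le_of_dvd hpos this
      omega
    · exact h0

lemma shift2_iter_pos (ℓ : ℕ) (hl : 1 ≤ ℓ) (u k : ℕ) (hu : u ≤ 2 ^ ℓ - 1) (hpos : 0 < u) :
    0 < (shift2 ℓ)^[k] u := by
  induction k with
  | zero => simpa
  | succ k ih =>
    rw [Function.iterate_succ_apply']
    exact shift2_pos ℓ hl _ (shift2_iter_le ℓ hl u k hu) ih

lemma shift2_iter_mod (ℓ : ℕ) (hl : 1 ≤ ℓ) (u : ℕ) (hu : u < 2 ^ ℓ - 1) (k : ℕ) :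
    (shift2 ℓ)^[k] u = 2 ^ k * u % (2 ^ ℓ - 1) := by
  have h2 : 2 ≤ 2 ^ ℓ := two_pow_ge ℓ hl
  have hT : 0 < 2 ^ ℓ - 1 := by omega
  induction k with
  | zero => simp [Nat.mod_eq_of_lt hu]
  | succ k ih =>
    rw [Function.iterate_succ_apply', ih]
    have hlt : 2 ^ k * u % (2 ^ ℓ - 1) < 2 ^ ℓ - 1 := Nat.mod_lt _ hT
    unfold shift2
    rw [if_neg (by omega)]
    rw [Nat.mul_mod, Nat.mod_mod_of_dvd _ dvd_rfl, ← Nat.mul_mod]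
    congr 1
    ring

lemma shift2_iter_ell (ℓ : ℕ) (hl : 1 ≤ ℓ) (u : ℕ) (hu : u ≤ 2 ^ ℓ - 1) :
    (shift2 ℓ)^[ℓ] u = u := by
  have h2 : 2 ≤ 2 ^ ℓ := two_pow_ge ℓ hl
  rcases eq_or_lt_of_le hu with h | h
  · have hfix : shift2 ℓ u = u := by unfold shift2; rw [if_pos h]
    exact Function.iterate_fixed hfix ℓ
  · rw [shift2_iter_mod ℓ hl u h ℓ]
    have hTu : 2 ^ ℓ * u = u + u * (2 ^ ℓ - 1) := by
      have h3 : 2 ^ ℓ = (2 ^ ℓ - 1) + 1 := by omega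
      conv_lhs => rw [h3]
      ring
    rw [hTu, Nat.add_mul_mod_self_right]
    exact Nat.mod_eq_of_lt h

lemma Efun_identity (ℓ : ℕ) (hl : 1 ≤ ℓ) (u : ℕ) (hu : u ≤ 2 ^ ℓ - 1) (j : ℕ) :
    2 ^ j * u = (shift2 ℓ)^[j] u + (2 ^ ℓ - 1) * Efun ℓ u j := by
  induction j with
  | zero => simp [Efun]
  | succ j ih =>
    have hj : (shift2 ℓ)^[j] u ≤ 2 ^ ℓ - 1 := shift2_iter_le ℓ hl u j hu
    obtain ⟨he, _⟩ := shift2_eps ℓ hl _ hj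
    rw [show shift2 ℓ ((shift2 ℓ)^[j] u) = (shift2 ℓ)^[j + 1] u from
      (Function.iterate_succ_apply' (shift2 ℓ) j u).symm] at he
    have h1 : 2 ^ (j + 1) * u = 2 * (2 ^ j * u) := by ring
    rw [h1, ih, Nat.mul_add, he]
    have hE : Efun ℓ u (j + 1) = 2 * Efun ℓ u j + eps ℓ ((shift2 ℓ)^[j] u) := rfl
    rw [hE]
    ring

lemma Efun_s2 (ℓ : ℕ) (hl : 1 ≤ ℓ) (u : ℕ) (hu : u ≤ 2 ^ ℓ - 1) (j : ℕ) :
    s2 (Efun ℓ u j) = ∑ k ∈ Finset.range j, eps ℓ ((shift2 ℓ)^[k] u) := by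
  induction j with
  | zero => simp [Efun, s2]
  | succ j ih =>
    have hj : (shift2 ℓ)^[j] u ≤ 2 ^ ℓ - 1 := shift2_iter_le ℓ hl u j hu
    obtain ⟨_, he1⟩ := shift2_eps ℓ hl _ hj
    show s2 (2 * Efun ℓ u j + eps ℓ ((shift2 ℓ)^[j] u)) = _
    rw [s2_two_mul_add _ _ he1, ih, Finset.sum_range_succ]

lemma eps_digit_sum (ℓ : ℕ) (hl : 1 ≤ ℓ) (u : ℕ) (hu : u ≤ 2 ^ ℓ - 1) :
    ∑ k ∈ Finset.range ℓ, eps ℓ ((shift2 ℓ)^[k] u) = s2 u := by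
  have h2 : 2 ≤ 2 ^ ℓ := two_pow_ge ℓ hl
  have hid := Efun_identity ℓ hl u hu ℓ
  rw [shift2_iter_ell ℓ hl u hu] at hid
  have hTu : 2 ^ ℓ * u = u + u * (2 ^ ℓ - 1) := by
    have h3 : 2 ^ ℓ = (2 ^ ℓ - 1) + 1 := by omega
    conv_lhs => rw [h3]
    ring
  rw [hTu] at hid
  have hcancel : u * (2 ^ ℓ - 1) = (2 ^ ℓ - 1) * Efun ℓ u ℓ := by omega
  have hu_eq : u = Efun ℓ u ℓ := by
    rw [mul_comm] at hcancel
    exact Nat.eq_of_mul_eq_mul_left (by omega) hcancel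
  rw [← Efun_s2 ℓ hl u hu ℓ, ← hu_eq]

/-! ### The lower bound -/

theorem lower_bound (m ℓ : ℕ) (hm : 14 ≤ m) (U : ℕ → ℕ)
    (hsol : IsSolution (Dset (m + 2)) ℓ U) :
    2 * ℓ ≤ (2 * (m + 2) - 1) * weight (Dset (m + 2)) U := by
  set n := m + 2 with hn
  set D := Dset n with hD
  have hl : 1 ≤ ℓ := hsol.len_pos
  have h2 : 2 ≤ 2 ^ ℓ := two_pow_ge ℓ hl
  set T := 2 ^ ℓ - 1 with hT
  have hTpos : 0 < T := by omega
  set A : ℕ → ℕ := fun k => ∑ d ∈ D, d * (shift2 ℓ)^[k] (U d) with hA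
  set S : ℕ → Finset ℕ := fun k => D.filter (fun d => eps ℓ ((shift2 ℓ)^[k] (U d)) = 1)
    with hS
  have hstep : ∀ k, 2 * A k = A (k + 1) +
      (∑ d ∈ D, d * eps ℓ ((shift2 ℓ)^[k] (U d))) * T := by
    intro k
    rw [hA]
    simp only
    rw [Finset.mul_sum, Finset.sum_mul, ← Finset.sum_add_distrib]
    apply Finset.sum_congr rfl
    intro d hd
    have hu := hsol.bounded d
    have hv := shift2_iter_le ℓ hl (U d) k hu
    obtain ⟨he, _⟩ := shift2_eps ℓ hl _ hv
    rw [show (shift2 ℓ)^[k + 1] (U d) = shift2 ℓ ((shift2 ℓ)^[k] (U d)) from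
      Function.iterate_succ_apply' (shift2 ℓ) k (U d)]
    calc 2 * (d * (shift2 ℓ)^[k] (U d)) = d * (2 * (shift2 ℓ)^[k] (U d)) := by ring
    _ = d * (shift2 ℓ ((shift2 ℓ)^[k] (U d)) + eps ℓ ((shift2 ℓ)^[k] (U d)) * T) := by
        rw [he]
    _ = _ := by ring
  have hAdvd : ∀ k, T ∣ A k := by
    intro k
    induction k with
    | zero =>
      have : A 0 = ∑ d ∈ D, d * U d := by rw [hA]; simp
      rw [this]; exact hsol.dvd
    | succ k ih =>
      have := hstep k
      have hd2 : T ∣ 2 * A k := Dvd.dvd.mul_left ih 2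
      have hd3 : T ∣ (∑ d ∈ D, d * eps ℓ ((shift2 ℓ)^[k] (U d))) * T := Dvd.intro_left _ rfl
      have : A (k + 1) = 2 * A k - (∑ d ∈ D, d * eps ℓ ((shift2 ℓ)^[k] (U d))) * T := by
        omega
      rw [this]
      exact Nat.dvd_sub hd2 hd3
  obtain ⟨d₀, hd₀D, hd₀⟩ : ∃ d ∈ D, 0 < d * U d := by
    by_contra hcon
    push_neg at hcon
    have : ∑ d ∈ D, d * U d = 0 := Finset.sum_eq_zero (fun d hd => by
      have := hcon d hd; omega)
    have := hsol.pos
    omega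
  have hd₀pos : 0 < d₀ := by
    rcases Nat.eq_zero_or_pos d₀ with h | h
    · simp [h] at hd₀
    · exact h
  have hU₀pos : 0 < U d₀ := by
    rcases Nat.eq_zero_or_pos (U d₀) with h | h
    · simp [h] at hd₀
    · exact h
  have hApos : ∀ k, 1 ≤ A k := by
    intro k
    have hiter : 0 < (shift2 ℓ)^[k] (U d₀) :=
      shift2_iter_pos ℓ hl (U d₀) k (hsol.bounded d₀) hU₀pos
    have : 1 ≤ d₀ * (shift2 ℓ)^[k] (U d₀) := by
      calc 1 = 1 * 1 := by norm_num
      _ ≤ d₀ * (shift2 ℓ)^[k] (U d₀) := Nat.mul_le_mul hd₀pos hiter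
    calc 1 ≤ d₀ * (shift2 ℓ)^[k] (U d₀) := this
    _ ≤ A k := Finset.single_le_sum (f := fun d => d * (shift2 ℓ)^[k] (U d))
        (fun i _ => Nat.zero_le _) hd₀D
  set φ : ℕ → ℕ := fun k => A k / T with hφdef
  have hATφ : ∀ k, A k = T * φ k := by
    intro k
    rw [hφdef]
    exact (Nat.mul_div_cancel' (hAdvd k) ).symm
  have hφ : ∀ k, k ≤ ℓ → 1 ≤ φ k := by
    intro k _
    have h1 := hApos k
    have h2' := hATφ k
    rcases Nat.eq_zero_or_pos (φ k) with h | h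
    · rw [h] at h2'; omega
    · exact h
  have hBS : ∀ k, ∑ d ∈ D, d * eps ℓ ((shift2 ℓ)^[k] (U d)) = ∑ d ∈ S k, d := by
    intro k
    rw [hS]
    simp only
    rw [Finset.sum_filter]
    apply Finset.sum_congr rfl
    intro d hd
    have hv := shift2_iter_le ℓ hl (U d) k (hsol.bounded d)
    obtain ⟨_, he1⟩ := shift2_eps ℓ hl _ hv
    rcases (by omega : eps ℓ ((shift2 ℓ)^[k] (U d)) = 0 ∨ eps ℓ ((shift2 ℓ)^[k] (U d)) = 1)
      with h | h <;> simp [h]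
  have hrel : ∀ k, k < ℓ → 2 * φ k = φ (k + 1) + ∑ d ∈ S k, d := by
    intro k _
    have := hstep k
    rw [hATφ k, hATφ (k + 1), hBS k] at this
    have hTt : T * (2 * φ k) = T * (φ (k + 1) + ∑ d ∈ S k, d) := by ring_nf; ring_nf at this; omega
    exact Nat.eq_of_mul_eq_mul_left hTpos hTt
  have hper : φ ℓ = φ 0 := by
    have : A ℓ = A 0 := by
      rw [hA]
      simp only
      apply Finset.sum_congr rfl
      intro d hd
      rw [shift2_iter_ell ℓ hl (U d) (hsol.bounded d)]
      simp
    rw [hφdef]; simp only [this]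
  have hcard : ∀ k, (S k).card = ∑ d ∈ D, eps ℓ ((shift2 ℓ)^[k] (U d)) := by
    intro k
    rw [hS]
    simp only
    rw [Finset.card_filter]
    apply Finset.sum_congr rfl
    intro d hd
    have hv := shift2_iter_le ℓ hl (U d) k (hsol.bounded d)
    obtain ⟨_, he1⟩ := shift2_eps ℓ hl _ hv
    rcases (by omega : eps ℓ ((shift2 ℓ)^[k] (U d)) = 0 ∨ eps ℓ ((shift2 ℓ)^[k] (U d)) = 1)
      with h | h <;> simp [h]
  have hweight : ∑ k ∈ Finset.range ℓ, (S k).card = weight D U := by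
    calc ∑ k ∈ Finset.range ℓ, (S k).card
        = ∑ k ∈ Finset.range ℓ, ∑ d ∈ D, eps ℓ ((shift2 ℓ)^[k] (U d)) := by
          apply Finset.sum_congr rfl; intro k _; exact hcard k
    _ = ∑ d ∈ D, ∑ k ∈ Finset.range ℓ, eps ℓ ((shift2 ℓ)^[k] (U d)) := Finset.sum_comm
    _ = ∑ d ∈ D, s2 (U d) := by
          apply Finset.sum_congr rfl
          intro d _
          exact eps_digit_sum ℓ hl (U d) (hsol.bounded d)
    _ = weight D U := rfl
  have := core_cyclic m ℓ hm φ S hφ (fun k _ => Finset.filter_subset _ _) hrel hper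
  rw [hweight] at this
  exact this

/-! ### The construction attaining the bound -/

theorem attained (m : ℕ) (hm : 14 ≤ m) :
    ∃ ℓ U, IsSolution (Dset (m + 2)) ℓ U ∧
      2 * ℓ = (2 * (m + 2) - 1) * weight (Dset (m + 2)) U := by
  have hP : 2 ^ 14 ≤ (2:ℕ) ^ m := Nat.pow_le_pow_right (by norm_num) hm
  set P := (2:ℕ) ^ m with hPdef
  have hPpos : 0 < P := Ppos m
  have hPev : P % 2 = 0 := by
    have : (2:ℕ) ∣ P := dvd_pow_self 2 (by omega)
    omega
  have hpn := pow_n_eq m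
  have h2m3 := pow_2m3 m
  have hMeq := M_eq m
  have hpm1 : (2:ℕ) ^ (m + 2 - 1) = 2 * P := by
    rw [show m + 2 - 1 = m + 1 from by omega, pow_add]; ring
  have hpm3 : (2:ℕ) ^ (m + 3) = 8 * P := by rw [pow_add]; ring
  set a := 3 * P - 1 with ha
  set b := 8 * P - 3 with hb
  have hab : a ≠ b := by omega
  have haD : a ∈ Dset (m + 2) := by
    rw [mem_Dset, hMeq, hpm1, hpn]
    refine ⟨by omega, by omega, by omega, by omega⟩
  have hbD : b ∈ Dset (m + 2) := by
    rw [mem_Dset, hMeq, hpm1, hpn]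
    refine ⟨by omega, by omega, by omega, by omega⟩
  set ℓ := 2 * (m + 2) - 1 with hℓ
  have hpow : (2:ℕ) ^ ℓ = 8 * (P * P) := by rw [h2m3]; ring
  set U := sol2 a (2 ^ (m + 3)) b 1 with hU
  have hUa : U a = 8 * P := by rw [hU]; unfold sol2; rw [if_pos rfl, hpm3]
  have hUb : U b = 1 := by
    rw [hU]; unfold sol2
    rw [if_neg (by omega : b ≠ a), if_pos rfl]
  have hUother : ∀ d, d ≠ a → d ≠ b → U d = 0 := by
    intro d h1 h2
    rw [hU]; unfold sol2
    rw [if_neg h1, if_neg h2]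
  have hsub : ({a, b} : Finset ℕ) ⊆ Dset (m + 2) := by
    intro d hd
    rcases Finset.mem_insert.mp hd with h | h
    · subst h; exact haD
    · rw [Finset.mem_singleton] at h; subst h; exact hbD
  have hPP2 : 2 * P ≤ P * P := Nat.mul_le_mul_right P (by omega)
  have hsum : ∑ d ∈ Dset (m + 2), d * U d = 3 * (2 ^ ℓ - 1) := by
    have h1 : ∑ d ∈ Dset (m + 2), d * U d = ∑ d ∈ ({a, b} : Finset ℕ), d * U d := by
      symm
      apply Finset.sum_subset hsub
      intro d _ hd
      have h1 : d ≠ a := by intro h; subst h; exact hd (Finset.mem_insert_self _ _)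
      have h2 : d ≠ b := by
        intro h; subst h
        exact hd (Finset.mem_insert_of_mem (Finset.mem_singleton_self _))
      rw [hUother d h1 h2, mul_zero]
    rw [h1, Finset.sum_pair hab, hUa, hUb, hpow, ha, hb]
    zify [show (1:ℕ) ≤ 3 * P from by omega, show (3:ℕ) ≤ 8 * P from by omega,
      show (1:ℕ) ≤ 8 * (P * P) from by omega]
    ring
  have hsol : IsSolution (Dset (m + 2)) ℓ U := by
    constructor
    · omega
    · intro d
      rw [hpow]
      rw [hU]; unfold sol2
      split_ifs with h1 h2
      · rw [hpm3]; omega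
      · omega
      · omega
    · intro d hd
      apply hUother
      · intro h; subst h; exact hd haD
      · intro h; subst h; exact hd hbD
    · rw [hsum]
      exact dvd_mul_left _ 3
    · rw [hsum, hpow]
      omega
  refine ⟨ℓ, U, hsol, ?_⟩
  have hweight : weight (Dset (m + 2)) U = 2 := by
    unfold weight
    have h1 : ∑ d ∈ Dset (m + 2), s2 (U d) = ∑ d ∈ ({a, b} : Finset ℕ), s2 (U d) := by
      symm
      apply Finset.sum_subset hsub
      intro d _ hd
      have h1 : d ≠ a := by intro h; subst h; exact hd (Finset.mem_insert_self _ _)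
      have h2 : d ≠ b := by
        intro h; subst h
        exact hd (Finset.mem_insert_of_mem (Finset.mem_singleton_self _))
      rw [hUother d h1 h2]
      simp [s2]
    rw [h1, Finset.sum_pair hab, hUa, hUb]
    rw [show (8:ℕ) * P = 2 ^ (m + 3) from hpm3.symm, s2_pow_two, s2_one]
  rw [hweight, hℓ]
  omega

/-- For `n` large enough and `d = 2^{n+1} − 3`, the 2-density of
`D = {i : 1 ≤ i ≤ d, i odd} \ {2^n − 1, 3·2^{n−1} − 1}` is `2/(2n−1)`: every solution
of length `ℓ` satisfies `(2n−1)·s(U) ≥ 2ℓ`, and some solution attains equality. -/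
theorem density_case_v :
    ∃ N : ℕ, ∀ n : ℕ, N ≤ n →
      (∀ ℓ U,
        IsSolution (((oddUpTo (2 ^ (n + 1) - 3)).erase (2 ^ n - 1)).erase (3 * 2 ^ (n - 1) - 1)) ℓ U →
        2 * ℓ ≤ (2 * n - 1) *
          weight (((oddUpTo (2 ^ (n + 1) - 3)).erase (2 ^ n - 1)).erase (3 * 2 ^ (n - 1) - 1)) U) ∧
      (∃ ℓ U,
        IsSolution (((oddUpTo (2 ^ (n + 1) - 3)).erase (2 ^ n - 1)).erase (3 * 2 ^ (n - 1) - 1)) ℓ U ∧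
        2 * ℓ = (2 * n - 1) *
          weight (((oddUpTo (2 ^ (n + 1) - 3)).erase (2 ^ n - 1)).erase (3 * 2 ^ (n - 1) - 1)) U) := by
  refine ⟨16, fun n hn => ?_⟩
  obtain ⟨m, rfl⟩ : ∃ m, n = m + 2 := ⟨n - 2, by omega⟩
  have hm : 14 ≤ m := by omega
  constructor
  · intro ℓ U hsol
    exact lower_bound m ℓ hm U hsol
  · exact attained m hm
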